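/- arXiv:1912.09266 — 2 statements merged into one kernel-verified Lean document; each statement's English description precedes it below -/
import Mathlib

section
/- (Saito's criterion, direction 3 ⇒ 1) Let (𝒜, m) be a multiarrangement in 𝕂^l and δ₁,…,δ_l ∈ D(𝒜, m) homogeneous derivations. If δ₁,…,δ_l are linearly independent over S and ∑_{i=1}^l pdeg(δ_i) = |m| = ∑_i m(H_i), then δ₁,…,δ_l form a free S-basis of D(𝒜, m). -/
open MvPolynomial

variable {l n : ℕ}

/-- The value of the derivation with coefficient vector `f` on the polynomial `a`. -/
noncomputable def derApp {R : Type*} [CommRing R] (a : MvPolynomial (Fin l) R) :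
    (Fin l → MvPolynomial (Fin l) R) →ₗ[MvPolynomial (Fin l) R] MvPolynomial (Fin l) R where
  toFun f := ∑ j, f j * pderiv j a
  map_add' f g := by simp [add_mul, Finset.sum_add_distrib]
  map_smul' c f := by simp [Finset.mul_sum, smul_eq_mul, mul_assoc]

/-- The module `D(𝒜,m)` of logarithmic derivations of the multiarrangement. -/
noncomputable def logDer {R : Type*} [CommRing R] (α : Fin n → MvPolynomial (Fin l) R)
    (m : Fin n → ℕ) : Submodule (MvPolynomial (Fin l) R) (Fin l → MvPolynomial (Fin l) R) :=
  ⨅ i, Submodule.comap (derApp (α i)) (Ideal.span {α i ^ m i})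

/-- `(𝒜,m)` is free with exponents `e`. -/
noncomputable def freeWithExp {R : Type*} [CommRing R] (α : Fin n → MvPolynomial (Fin l) R)
    (m : Fin n → ℕ) (e : Fin l → ℕ) : Prop :=
  ∃ b : Module.Basis (Fin l) (MvPolynomial (Fin l) R) (logDer α m),
    ∀ i j, ((b i : Fin l → MvPolynomial (Fin l) R) j).IsHomogeneous (e i)

/-- The submodule `M(𝒜,m) ⊆ S^n`. -/
noncomputable def Mmod {R : Type*} [CommRing R] (α : Fin n → MvPolynomial (Fin l) R)
    (m : Fin n → ℕ) : Submodule (MvPolynomial (Fin l) R) (Fin n → MvPolynomial (Fin l) R) :=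
  Submodule.span _ (Set.range fun i => Pi.single i (α i ^ m i))

/-- Multiplication by the Jacobian matrix `(∂α_i/∂x_j)`. -/
noncomputable def jacMap {R : Type*} [CommRing R] (α : Fin n → MvPolynomial (Fin l) R) :
    (Fin l → MvPolynomial (Fin l) R) →ₗ[MvPolynomial (Fin l) R]
      (Fin n → MvPolynomial (Fin l) R) :=
  LinearMap.pi (fun i => derApp (α i))

/-- The map `φ : S^l → S^n / M(𝒜,m)`. -/
noncomputable def phiMap {R : Type*} [CommRing R] (α : Fin n → MvPolynomial (Fin l) R)
    (m : Fin n → ℕ) :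
    (Fin l → MvPolynomial (Fin l) R) →ₗ[MvPolynomial (Fin l) R]
      ((Fin n → MvPolynomial (Fin l) R) ⧸ Mmod α m) :=
  (Mmod α m).mkQ.comp (jacMap α)


section Aux

variable {K : Type*} [Field K] {σ : Type*}

lemma degEq (d : σ →₀ ℕ) : (d.sum fun _ e => e) = d.degree := by
  simp [Finsupp.degree_apply, Finsupp.sum]

lemma exists_top_monomial (p : MvPolynomial σ K) (hp : p ≠ 0) :
    ∃ d ∈ p.support, d.degree = p.totalDegree := by
  obtain ⟨d, hd, he⟩ := Finset.exists_mem_eq_sup p.support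
    (Finset.nonempty_iff_ne_empty.2 fun h => hp (MvPolynomial.support_eq_empty.1 h))
    (fun s : σ →₀ ℕ => s.sum fun _ e => e)
  exact ⟨d, hd, by rw [← degEq d, ← he]; rfl⟩

lemma topComponent_ne_zero (p : MvPolynomial σ K) (hp : p ≠ 0) :
    homogeneousComponent p.totalDegree p ≠ 0 := by
  obtain ⟨d, hd, he⟩ := exists_top_monomial p hp
  intro h
  have h2 := coeff_homogeneousComponent (σ := σ) p.totalDegree p d
  rw [h, coeff_zero, if_pos he] at h2
  exact (mem_support_iff.1 hd) h2.symm

lemma sub_topComponent (p : MvPolynomial σ K) :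
    p - homogeneousComponent p.totalDegree p = 0 ∨
    (p - homogeneousComponent p.totalDegree p).totalDegree < p.totalDegree := by
  set r := p - homogeneousComponent p.totalDegree p with hr
  by_cases h0 : r = 0
  · exact Or.inl h0
  right
  have key : ∀ d ∈ r.support, d.degree < p.totalDegree := by
    intro d hd
    have hcd : coeff d r ≠ 0 := mem_support_iff.1 hd
    have hcr : coeff d r = coeff d p - (if d.degree = p.totalDegree then coeff d p else 0) := by
      rw [hr, coeff_sub, coeff_homogeneousComponent]
    by_cases hdeg : d.degree = p.totalDegree
    · rw [hcr, if_pos hdeg, sub_self] at hcd; exact absurd rfl hcd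
    · have hcp : coeff d p ≠ 0 := by
        intro h; rw [hcr, h, if_neg hdeg, sub_zero] at hcd; exact hcd rfl
      have := le_totalDegree (mem_support_iff.2 hcp)
      rw [degEq] at this
      omega
  rcases Nat.eq_zero_or_pos p.totalDegree with h | h
  · exfalso
    obtain ⟨d, hd, _⟩ := exists_top_monomial r h0
    have := key d hd; omega
  · rw [MvPolynomial.totalDegree]
    refine (Finset.sup_lt_iff h).2 (fun d hd => ?_)
    rw [degEq]
    exact key d hd

lemma totalDegree_mul_eq' {p q : MvPolynomial σ K} (hp : p ≠ 0) (hq : q ≠ 0) :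
    (p * q).totalDegree = p.totalDegree + q.totalDegree := by
  refine le_antisymm (totalDegree_mul p q) ?_
  set a := p.totalDegree
  set b := q.totalDegree
  set pa := homogeneousComponent a p with hpa_def
  set qb := homogeneousComponent b q with hqb_def
  have hpa : pa ≠ 0 := topComponent_ne_zero p hp
  have hqb : qb ≠ 0 := topComponent_ne_zero q hq
  have hpad : pa.totalDegree ≤ a := (homogeneousComponent_isHomogeneous a p).totalDegree_le
  have haux : ∀ x y : MvPolynomial σ K, x = 0 ∨ x.totalDegree < a → y.totalDegree ≤ b →
      homogeneousComponent (a + b) (x * y) = 0 := by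
    intro x y hx hy
    rcases hx with rfl | hx
    · rw [zero_mul, map_zero]
    apply homogeneousComponent_eq_zero
    calc (x * y).totalDegree ≤ x.totalDegree + y.totalDegree := totalDegree_mul _ _
      _ < a + b := by omega
  have haux' : ∀ x y : MvPolynomial σ K, x.totalDegree ≤ a → y = 0 ∨ y.totalDegree < b →
      homogeneousComponent (a + b) (x * y) = 0 := by
    intro x y hx hy
    rcases hy with rfl | hy
    · rw [mul_zero, map_zero]
    apply homogeneousComponent_eq_zero
    calc (x * y).totalDegree ≤ x.totalDegree + y.totalDegree := totalDegree_mul _ _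
      _ < a + b := by omega
  have hmul : homogeneousComponent (a + b) (p * q) = pa * qb := by
    have hdecomp : p * q = (p - pa) * q + pa * (q - qb) + pa * qb := by ring
    rw [hdecomp, map_add, map_add,
      haux (p - pa) q (sub_topComponent p) le_rfl,
      haux' pa (q - qb) hpad (sub_topComponent q),
      homogeneousComponent_of_mem
        ((mem_homogeneousSubmodule _ _).2
          ((homogeneousComponent_isHomogeneous a p).mul
            (homogeneousComponent_isHomogeneous b q))),
      if_pos rfl, zero_add, zero_add]
  have hne : homogeneousComponent (a + b) (p * q) ≠ 0 := by
    rw [hmul]; exact mul_ne_zero hpa hqb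
  by_contra hlt
  exact hne (homogeneousComponent_eq_zero _ _ (lt_of_not_ge hlt))

lemma eq_C_of_totalDegree_eq_zero' [DecidableEq σ] {p : MvPolynomial σ K} (h : p.totalDegree = 0) :
    p = C (coeff 0 p) := by
  have h' := (totalDegree_eq_zero_iff σ p).1 h
  ext d
  rcases eq_or_ne d 0 with rfl | hd
  · simp
  · rw [coeff_C, if_neg (fun he => hd he.symm)]
    by_contra hc
    exact hd (Finsupp.ext fun x => h' d (mem_support_iff.2 hc) x)

end Aux

section Aux2
variable {K : Type*} [Field K] {l : ℕ}

lemma finsupp_degree_one {d : Fin l →₀ ℕ} (h : d.degree = 1) :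
    ∃ j, d = Finsupp.single j 1 := by
  classical
  have hne : d ≠ 0 := by
    intro h0; rw [h0] at h; simp [Finsupp.degree] at h
  obtain ⟨j, hj⟩ := Finsupp.support_nonempty_iff.2 hne
  have hj1 : 1 ≤ d j := Nat.one_le_iff_ne_zero.2 (Finsupp.mem_support_iff.1 hj)
  have hsum : d.degree = d j + ∑ a ∈ d.support.erase j, d a := by
    rw [Finsupp.degree_apply, ← Finset.add_sum_erase _ _ hj]
  have hrest : ∀ a ∈ d.support.erase j, d a = 0 := by
    intro a ha
    have h1 : ∑ a ∈ d.support.erase j, d a = 0 := by omega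
    exact Finset.sum_eq_zero_iff.1 h1 a ha
  refine ⟨j, Finsupp.ext fun a => ?_⟩
  rcases eq_or_ne a j with rfl | hne'
  · rw [Finsupp.single_eq_same]; omega
  · rw [Finsupp.single_eq_of_ne' (Ne.symm hne')]
    by_cases has : a ∈ d.support
    · exact hrest a (Finset.mem_erase.2 ⟨hne', has⟩)
    · exact Finsupp.notMem_support_iff.1 has

lemma degree_single_one (j : Fin l) : (Finsupp.single j 1 : Fin l →₀ ℕ).degree = 1 := by
  classical
  rw [Finsupp.degree_apply, Finsupp.support_single_ne_zero j one_ne_zero]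
  simp

lemma hom_one_eq {α : MvPolynomial (Fin l) K} (h : α.IsHomogeneous 1) :
    α = ∑ j, C (coeff (Finsupp.single j 1) α) * X j := by
  classical
  ext d
  rw [coeff_sum]
  by_cases hd : d.degree = 1
  · obtain ⟨j0, rfl⟩ := finsupp_degree_one hd
    rw [Finset.sum_eq_single j0]
    · rw [coeff_C_mul, coeff_X', if_pos rfl, mul_one]
    · intro j _ hj
      rw [coeff_C_mul, coeff_X',
        if_neg (fun he => hj ((Finsupp.single_left_inj one_ne_zero).1 he)), mul_zero]
    · intro h'; exact absurd (Finset.mem_univ j0) h'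
  · rw [h.coeff_eq_zero hd]
    refine (Finset.sum_eq_zero fun j _ => ?_).symm
    rw [coeff_C_mul, coeff_X', if_neg (fun he => hd (by rw [← he, degree_single_one])), mul_zero]

lemma pderiv_hom_one {α : MvPolynomial (Fin l) K} (h : α.IsHomogeneous 1) (j : Fin l) :
    pderiv j α = C (coeff (Finsupp.single j 1) α) := by
  classical
  conv_lhs => rw [hom_one_eq h]
  rw [map_sum, Finset.sum_eq_single j]
  · rw [pderiv_C_mul, pderiv_X_self, mul_one]
  · intro k _ hk
    rw [pderiv_C_mul, pderiv_X_of_ne hk, mul_zero]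
  · intro h'; exact absurd (Finset.mem_univ j) h'

lemma prime_of_hom_one {α : MvPolynomial (Fin l) K} (h : α.IsHomogeneous 1) (h0 : α ≠ 0) :
    Prime α := by
  classical
  rw [← UniqueFactorizationMonoid.irreducible_iff_prime]
  have htd : α.totalDegree = 1 := h.totalDegree h0
  constructor
  · intro hu
    obtain ⟨v, hv⟩ := hu.exists_right_inv
    have hv0 : v ≠ 0 := by rintro rfl; rw [mul_zero] at hv; exact one_ne_zero hv.symm
    have := totalDegree_mul_eq' h0 hv0
    rw [hv, totalDegree_one, htd] at this
    omega
  · rintro p q hpq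
    have hp0 : p ≠ 0 := by rintro rfl; rw [zero_mul] at hpq; exact h0 hpq
    have hq0 : q ≠ 0 := by rintro rfl; rw [mul_zero] at hpq; exact h0 hpq
    have hd : p.totalDegree + q.totalDegree = 1 := by
      rw [← totalDegree_mul_eq' hp0 hq0, ← hpq, htd]
    rcases (by omega : p.totalDegree = 0 ∨ q.totalDegree = 0) with h1 | h1
    · left
      rw [eq_C_of_totalDegree_eq_zero' h1]
      refine (isUnit_iff_ne_zero.2 fun hc => ?_).map (C : K →+* _)
      exact hp0 (by rw [eq_C_of_totalDegree_eq_zero' h1, hc, map_zero])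
    · right
      rw [eq_C_of_totalDegree_eq_zero' h1]
      refine (isUnit_iff_ne_zero.2 fun hc => ?_).map (C : K →+* _)
      exact hq0 (by rw [eq_C_of_totalDegree_eq_zero' h1, hc, map_zero])

lemma det_isHomogeneous (N : Matrix (Fin l) (Fin l) (MvPolynomial (Fin l) K)) (e : Fin l → ℕ)
    (h : ∀ i j, (N i j).IsHomogeneous (e i)) : N.det.IsHomogeneous (∑ i, e i) := by
  rw [Matrix.det_apply]
  apply IsHomogeneous.sum
  intro σp _
  have hp : (∏ i, N (σp i) i).IsHomogeneous (∑ i, e (σp i)) :=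
    IsHomogeneous.prod _ _ _ (fun i _ => h (σp i) i)
  have he : ∑ i, e (σp i) = ∑ i, e i := Equiv.sum_comp σp e
  rw [he] at hp
  rcases Int.units_eq_one_or (Equiv.Perm.sign σp) with hs | hs <;> rw [hs]
  · simpa using hp
  · simpa using hp.neg

lemma pow_dvd_det {α : MvPolynomial (Fin l) K} (hα : α.IsHomogeneous 1) (h0 : α ≠ 0)
    (mm : ℕ) (N : Matrix (Fin l) (Fin l) (MvPolynomial (Fin l) K))
    (hN : ∀ i, α ^ mm ∣ ∑ j, N i j * pderiv j α) :
    α ^ mm ∣ N.det := by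
  classical
  obtain ⟨j0, hj0⟩ : ∃ j0, coeff (Finsupp.single j0 1) α ≠ 0 := by
    by_contra hc
    push_neg at hc
    apply h0
    rw [hom_one_eq hα]
    simp [hc]
  set c : Fin l → MvPolynomial (Fin l) K := fun j => C (coeff (Finsupp.single j 1) α) with hc
  have h1 : (N.updateCol j0 (fun k => ∑ i, c i • N k i)).det = c j0 • N.det :=
    Matrix.det_updateCol_sum N j0 c
  have hcol : (fun k => ∑ i, c i • N k i) = fun k => ∑ j, N k j * pderiv j α := by
    funext k
    refine Finset.sum_congr rfl fun j _ => ?_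
    rw [pderiv_hom_one hα, smul_eq_mul, mul_comm, hc]
  choose g hg using hN
  have hcol2 : (fun k => ∑ j, N k j * pderiv j α) = (α ^ mm) • g := by
    funext k
    rw [hg k, Pi.smul_apply, smul_eq_mul]
  have h2 : α ^ mm ∣ c j0 * N.det := by
    rw [← smul_eq_mul, ← h1, hcol, hcol2, Matrix.det_updateCol_smul]
    exact Dvd.intro _ rfl
  obtain ⟨u, hu⟩ := (isUnit_iff_ne_zero.2 hj0).map (C : K →+* MvPolynomial (Fin l) K)
  have hcj0 : c j0 = (u : MvPolynomial (Fin l) K) := hu.symm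
  have key : N.det = ↑u⁻¹ * (c j0 * N.det) := by
    rw [hcj0, ← mul_assoc, Units.inv_mul, one_mul]
  rw [key]
  exact Dvd.dvd.mul_left h2 _

end Aux2
section Aux3
variable {K : Type*} [Field K] {l n : ℕ}

lemma not_dvd_of_ne {α : Fin n → MvPolynomial (Fin l) K}
    (hhom : ∀ i, (α i).IsHomogeneous 1) (hnz : ∀ i, α i ≠ 0)
    (hprop : ∀ i j, i ≠ j → ∀ c : K, α j ≠ MvPolynomial.C c * α i)
    {k j : Fin n} (hkj : k ≠ j) : ¬ α k ∣ α j := by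
  classical
  rintro ⟨g, hg⟩
  have hg0 : g ≠ 0 := by rintro rfl; rw [mul_zero] at hg; exact hnz j hg
  have h1 : (α j).totalDegree = 1 + g.totalDegree := by
    rw [hg, totalDegree_mul_eq' (hnz k) hg0, (hhom k).totalDegree (hnz k)]
  have h2 : (α j).totalDegree = 1 := (hhom j).totalDegree (hnz j)
  have hgd : g.totalDegree = 0 := by omega
  have hgc : g = MvPolynomial.C (MvPolynomial.coeff 0 g) := eq_C_of_totalDegree_eq_zero' hgd
  refine hprop k j hkj (MvPolynomial.coeff 0 g) ?_
  conv_lhs => rw [hg, hgc]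
  exact mul_comm _ _

lemma prod_pow_dvd {α : Fin n → MvPolynomial (Fin l) K} {m : Fin n → ℕ}
    (hhom : ∀ i, (α i).IsHomogeneous 1) (hnz : ∀ i, α i ≠ 0)
    (hprop : ∀ i j, i ≠ j → ∀ c : K, α j ≠ MvPolynomial.C c * α i)
    (f : MvPolynomial (Fin l) K) (h : ∀ k, (α k) ^ (m k) ∣ f) :
    (∏ k, (α k) ^ (m k)) ∣ f := by
  classical
  suffices H : ∀ s : Finset (Fin n), (∏ k ∈ s, (α k) ^ (m k)) ∣ f from H Finset.univ
  intro s
  induction s using Finset.induction_on with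
  | empty => simpa using one_dvd f
  | @insert k s hk ih =>
    rw [Finset.prod_insert hk]
    obtain ⟨t, ht⟩ := ih
    have hprime := prime_of_hom_one (hhom k) (hnz k)
    have hnd : ¬ α k ∣ ∏ j ∈ s, (α j) ^ (m j) := by
      intro hd
      obtain ⟨j, hj, hdj⟩ := hprime.exists_mem_finset_dvd hd
      exact not_dvd_of_ne hhom hnz hprop (fun he => hk (by rw [he]; exact hj))
        (hprime.dvd_of_dvd_pow hdj)
    have hkd : (α k) ^ (m k) ∣ (∏ j ∈ s, (α j) ^ (m j)) * t := ht ▸ h k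
    obtain ⟨u, hu⟩ := hprime.pow_dvd_of_dvd_mul_left (m k) hnd hkd
    exact ⟨u, by rw [ht, hu]; ring⟩

end Aux3

/-- Saito's criterion, (3) ⇒ (1): if δ₁,…,δ_l ∈ D(𝒜,m) are homogeneous, linearly
independent over S and ∑ pdeg(δ_i) = |m|, then they form a basis of D(𝒜,m). -/
theorem saito_pdeg {K : Type*} [Field K] {l n : ℕ}
    (α : Fin n → MvPolynomial (Fin l) K) (m : Fin n → ℕ)
    (hhom : ∀ i, (α i).IsHomogeneous 1) (hnz : ∀ i, α i ≠ 0)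
    (hprop : ∀ i j, i ≠ j → ∀ c : K, α j ≠ MvPolynomial.C c * α i)
    (δ : Fin l → (Fin l → MvPolynomial (Fin l) K))
    (hδ : ∀ i, δ i ∈ logDer α m)
    (e : Fin l → ℕ) (hδhom : ∀ i j, (δ i j).IsHomogeneous (e i)) (hδnz : ∀ i, δ i ≠ 0)
    (hli : LinearIndependent (MvPolynomial (Fin l) K) δ)
    (hsum : ∑ i, e i = ∑ i, m i) :
    ∃ b : Module.Basis (Fin l) (MvPolynomial (Fin l) K) (logDer α m),
      ∀ i, (b i : Fin l → MvPolynomial (Fin l) K) = δ i := by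
  classical
  set M : Matrix (Fin l) (Fin l) (MvPolynomial (Fin l) K) := Matrix.of (fun i j => δ i j) with hM
  have hmem : ∀ θ : Fin l → MvPolynomial (Fin l) K, θ ∈ logDer α m ↔
      ∀ k, (α k) ^ (m k) ∣ ∑ j, θ j * pderiv j (α k) := by
    intro θ
    simp only [logDer, Submodule.mem_iInf, Submodule.mem_comap, Ideal.mem_span_singleton, derApp,
      LinearMap.coe_mk, AddHom.coe_mk]
  have hdvd_det : ∀ N : Matrix (Fin l) (Fin l) (MvPolynomial (Fin l) K),
      (∀ i, (N i) ∈ logDer α m) → (∏ k, (α k) ^ (m k)) ∣ N.det := by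
    intro N hNrows
    exact prod_pow_dvd hhom hnz hprop _
      (fun k => pow_dvd_det (hhom k) (hnz k) (m k) N (fun i => (hmem (N i)).1 (hNrows i) k))
  have hdet : M.det ≠ 0 := by
    intro h
    obtain ⟨v, hv0, hv⟩ := Matrix.exists_vecMul_eq_zero_iff.2 h
    have hz : ∑ i, v i • δ i = 0 := by
      funext j
      have h1 := congrFun hv j
      simp only [Matrix.vecMul, dotProduct, hM, Matrix.of_apply, Pi.zero_apply] at h1
      simpa [Finset.sum_apply] using h1
    exact hv0 (funext fun i => Fintype.linearIndependent_iff.1 hli v hz i)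
  obtain ⟨t, ht⟩ := hdvd_det M hδ
  have hdethom : M.det.IsHomogeneous (∑ i, e i) := det_isHomogeneous M e (fun i j => hδhom i j)
  have hprodhom : (∏ k, (α k) ^ (m k)).IsHomogeneous (∑ k, m k) := by
    have h1 := MvPolynomial.IsHomogeneous.prod Finset.univ (fun k => (α k) ^ (m k))
      (fun k => m k) (fun k _ => by simpa using (hhom k).pow (m k))
    simpa using h1
  have hprod0 : (∏ k, (α k) ^ (m k)) ≠ 0 :=
    Finset.prod_ne_zero_iff.2 fun k _ => pow_ne_zero _ (hnz k)
  have ht0 : t ≠ 0 := by rintro rfl; rw [mul_zero] at ht; exact hdet ht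
  have htd : t.totalDegree = 0 := by
    have h1 := hdethom.totalDegree hdet
    have h2 := totalDegree_mul_eq' hprod0 ht0
    rw [← ht, h1] at h2
    rw [hprodhom.totalDegree hprod0] at h2
    omega
  set cc := MvPolynomial.coeff 0 t with hcc_def
  have htc : t = MvPolynomial.C cc := eq_C_of_totalDegree_eq_zero' htd
  have hcc : cc ≠ 0 := by rintro h; rw [h, map_zero] at htc; exact ht0 htc
  have hspan : ∀ θ : Fin l → MvPolynomial (Fin l) K, θ ∈ logDer α m →
      ∃ g : Fin l → MvPolynomial (Fin l) K, θ = ∑ i, g i • δ i := by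
    intro θ hθ
    have hcr : ∀ i, M.det ∣ (M.transpose).cramer θ i := by
      intro i
      rw [Matrix.cramer_transpose_apply]
      have hrows : ∀ i', (M.updateRow i θ) i' ∈ logDer α m := by
        intro i'
        rcases eq_or_ne i' i with rfl | hne
        · rw [Matrix.updateRow_self]; exact hθ
        · rw [Matrix.updateRow_ne hne]; exact hδ i'
      obtain ⟨s, hs⟩ := hdvd_det (M.updateRow i θ) hrows
      refine ⟨MvPolynomial.C cc⁻¹ * s, ?_⟩
      rw [hs, ht, htc]
      calc (∏ k, (α k) ^ (m k)) * s
          = (∏ k, (α k) ^ (m k)) * s * (MvPolynomial.C cc * MvPolynomial.C cc⁻¹) := by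
            rw [← map_mul, mul_inv_cancel₀ hcc, map_one, mul_one]
        _ = (∏ k, (α k) ^ (m k)) * MvPolynomial.C cc * (MvPolynomial.C cc⁻¹ * s) := by ring
    choose g hg using hcr
    refine ⟨g, ?_⟩
    have h3 := Matrix.mulVec_cramer M.transpose θ
    rw [Matrix.det_transpose] at h3
    have h4 : (M.transpose).cramer θ = M.det • g := funext fun i => by
      rw [Pi.smul_apply, smul_eq_mul]; exact hg i
    rw [h4, Matrix.mulVec_smul] at h3
    have h6 : θ = M.transpose.mulVec g := by
      funext j
      have h5 := congrFun h3 j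
      simp only [Pi.smul_apply, smul_eq_mul] at h5
      exact (mul_left_cancel₀ hdet h5.symm)
    rw [h6]
    funext j
    simp only [Matrix.mulVec, dotProduct, Matrix.transpose_apply, Finset.sum_apply,
      Pi.smul_apply, smul_eq_mul, hM, Matrix.of_apply]
    exact Finset.sum_congr rfl fun i _ => mul_comm _ _
  set δ' : Fin l → (logDer α m) := fun i => ⟨δ i, hδ i⟩ with hδ'
  have hli' : LinearIndependent (MvPolynomial (Fin l) K) δ' :=
    LinearIndependent.of_comp (logDer α m).subtype hli
  have hsp : ⊤ ≤ Submodule.span (MvPolynomial (Fin l) K) (Set.range δ') := by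
    rintro ⟨θ, hθ⟩ -
    obtain ⟨g, hg⟩ := hspan θ hθ
    have heq : (⟨θ, hθ⟩ : logDer α m) = ∑ i, g i • δ' i := by
      apply Subtype.ext
      exact hg.trans (by simp [hδ'])
    rw [heq]
    exact Submodule.sum_mem _ fun i _ =>
      Submodule.smul_mem _ _ (Submodule.subset_span ⟨i, rfl⟩)
  exact ⟨Module.Basis.mk hli' hsp, fun i => by rw [Module.Basis.mk_apply]⟩
end

section
/- Let (𝒜,m) be a multiarrangement in ℚ^l with integer defining forms and p a good prime for (𝒜,m). If p is not a zero divisor on the cokernel of φ_ℤ, then the reduction map π_p^l: Ker(φ_ℤ) → D(𝒜_p, m) is surjective. -/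
open MvPolynomial

variable {l n : ℕ}

/-- If the good prime p is not a zero divisor on coker(φ_ℤ), then the reduction map
Ker(φ_ℤ) → D(𝒜_p,m) is surjective. -/
theorem surjective_of_not_zero_divisor {l n : ℕ}
    (α : Fin n → MvPolynomial (Fin l) ℤ) (m : Fin n → ℕ)
    (hhom : ∀ i, (α i).IsHomogeneous 1) (hnz : ∀ i, α i ≠ 0)
    (hprim : ∀ i (q : ℕ), q.Prime → ¬ (MvPolynomial.C (q : ℤ) ∣ α i))
    (p : ℕ) (hp : p.Prime)
    (hgood : ∀ i j, i ≠ j → MvPolynomial.map (Int.castRingHom (ZMod p)) (α i) ≠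
      MvPolynomial.map (Int.castRingHom (ZMod p)) (α j))
    (hnzd : ∀ v : ((Fin n → MvPolynomial (Fin l) ℤ) ⧸ Mmod α m) ⧸
        LinearMap.range (phiMap α m),
      (p : MvPolynomial (Fin l) ℤ) • v = 0 → v = 0) :
    ∀ d ∈ logDer (fun i => MvPolynomial.map (Int.castRingHom (ZMod p)) (α i)) m,
      ∃ g ∈ LinearMap.ker (phiMap α m),
        (fun j => MvPolynomial.map (Int.castRingHom (ZMod p)) (g j)) = d := by
  intro d hd
  set π : MvPolynomial (Fin l) ℤ →+* MvPolynomial (Fin l) (ZMod p) :=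
    MvPolynomial.map (Int.castRingHom (ZMod p)) with hπdef
  have hsurj : Function.Surjective π :=
    MvPolynomial.map_surjective _ ZMod.intCast_surjective
  -- kernel of π is generated by p
  have hker : ∀ q : MvPolynomial (Fin l) ℤ, π q = 0 →
      ∃ r, q = (p : MvPolynomial (Fin l) ℤ) * r := by
    intro q hq
    have hq' : q ∈ RingHom.ker π := hq
    rw [hπdef, MvPolynomial.ker_map, ZMod.ker_intCastRingHom, Ideal.map_span,
      Set.image_singleton] at hq'
    rw [Ideal.mem_span_singleton] at hq'
    obtain ⟨r, hr⟩ := hq'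
    exact ⟨r, by rw [hr, map_natCast]⟩
  choose dt hdt using fun j => hsurj (d j)
  simp only [logDer, Submodule.mem_iInf, Submodule.mem_comap] at hd
  have hd' : ∀ i, ∃ c, derApp (π (α i)) d = π (α i) ^ m i * c := by
    intro i
    have := hd i
    rw [Ideal.mem_span_singleton] at this
    exact this
  choose c hc using hd'
  choose ct hct using fun i => hsurj (c i)
  set w : Fin n → MvPolynomial (Fin l) ℤ :=
    fun i => (∑ j, dt j * MvPolynomial.pderiv j (α i)) - α i ^ m i * ct i with hwdef
  have hπw : ∀ i, π (w i) = 0 := by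
    intro i
    have h1 : π (∑ j, dt j * MvPolynomial.pderiv j (α i)) = derApp (π (α i)) d := by
      show _ = ∑ j, d j * MvPolynomial.pderiv j (π (α i))
      rw [map_sum]
      refine Finset.sum_congr rfl fun j _ => ?_
      rw [map_mul, hdt, hπdef, MvPolynomial.pderiv_map]
    rw [hwdef]
    simp only [map_sub, h1, map_mul, map_pow, hct, hc, sub_self]
  choose r hr using fun i => hker _ (hπw i)
  -- the element of M(𝒜,m)
  set Msum : Fin n → MvPolynomial (Fin l) ℤ :=
    ∑ i, ct i • (Pi.single i (α i ^ m i) : Fin n → MvPolynomial (Fin l) ℤ) with hMsumdef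
  have hMsum_mem : Msum ∈ Mmod α m := by
    refine Submodule.sum_mem _ fun i _ => Submodule.smul_mem _ _ ?_
    exact Submodule.subset_span ⟨i, rfl⟩
  have hjac : jacMap α dt = Msum + (p : MvPolynomial (Fin l) ℤ) • r := by
    funext i
    have hMi : Msum i = ct i * α i ^ m i := by
      rw [hMsumdef]
      simp only [Finset.sum_apply, Pi.smul_apply, smul_eq_mul, Pi.single_apply]
      simp [Finset.sum_ite_eq', mul_comm]
    have : jacMap α dt i = ∑ j, dt j * MvPolynomial.pderiv j (α i) := rfl
    have hwi := hr i
    rw [hwdef] at hwi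
    simp only [Pi.add_apply, Pi.smul_apply, smul_eq_mul, this, hMi]
    linear_combination hwi
  -- phiMap dt = p • mkQ r
  have hphi : phiMap α m dt = (p : MvPolynomial (Fin l) ℤ) • (Mmod α m).mkQ r := by
    show (Mmod α m).mkQ (jacMap α dt) = _
    rw [hjac, map_add, map_smul]
    rw [Submodule.mkQ_apply, (Submodule.Quotient.mk_eq_zero _).mpr hMsum_mem, zero_add]
  -- apply the hypothesis on the cokernel
  have hv : (Submodule.Quotient.mk ((Mmod α m).mkQ r) :
      ((Fin n → MvPolynomial (Fin l) ℤ) ⧸ Mmod α m) ⧸ LinearMap.range (phiMap α m)) = 0 := by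
    apply hnzd
    rw [← Submodule.Quotient.mk_smul, ← hphi, Submodule.Quotient.mk_eq_zero]
    exact ⟨dt, rfl⟩
  rw [Submodule.Quotient.mk_eq_zero] at hv
  obtain ⟨h, hh⟩ := hv
  have hhr : jacMap α h - r ∈ Mmod α m := by
    have : (Mmod α m).mkQ (jacMap α h) = (Mmod α m).mkQ r := hh
    rwa [← sub_eq_zero, ← map_sub, Submodule.mkQ_apply, Submodule.Quotient.mk_eq_zero] at this
  refine ⟨dt - (p : MvPolynomial (Fin l) ℤ) • h, ?_, ?_⟩
  · rw [LinearMap.mem_ker]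
    show (Mmod α m).mkQ (jacMap α (dt - (p : MvPolynomial (Fin l) ℤ) • h)) = 0
    rw [map_sub, map_smul, hjac]
    have : Msum + (p : MvPolynomial (Fin l) ℤ) • r -
        (p : MvPolynomial (Fin l) ℤ) • jacMap α h =
        Msum - (p : MvPolynomial (Fin l) ℤ) • (jacMap α h - r) := by
      rw [smul_sub]; abel
    rw [this, Submodule.mkQ_apply, Submodule.Quotient.mk_eq_zero]
    exact Submodule.sub_mem _ hMsum_mem (Submodule.smul_mem _ _ hhr)
  · funext j
    show π (dt j - (p : MvPolynomial (Fin l) ℤ) * h j) = d j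
    rw [map_sub, map_mul, hdt]
    have : π (p : MvPolynomial (Fin l) ℤ) = 0 := by
      rw [map_natCast]
      exact CharP.cast_eq_zero _ p
    rw [this, zero_mul, sub_zero]
end
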